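/- The number operator N (acting as n·I on SⁿV, extended to SV' by antiduality) has kernel ζ_V·e^{Z_V} ∈ SV_ℂ': for φ, ψ ∈ SⁿV, (ζ_V e^{Z_V})(ψ₊φ₋) = n⟨ψ|φ⟩ = ⟨ψ|Nφ⟩. -/

import Mathlib

open scoped ComplexConjugate

noncomputable section

section Defs

variable {V W A : Type} [AddCommGroup V] [Module ℂ V] [CommRing A] [Algebra ℂ A]

/-- `A` (with embedding `ι`) is the symmetric algebra of `V`: universal property. -/
def IsSymmAlg (ι : V →ₗ[ℂ] A) : Prop :=
  ∀ (B : Type) [CommRing B] [Algebra ℂ B] (f : V →ₗ[ℂ] B),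
    ∃! F : A →ₐ[ℂ] B, ∀ v, F (ι v) = f v

/-- The span of `n`-fold products of generators: the degree-`n` part. -/
def GradeOf (gen : W → A) (n : ℕ) : Submodule ℂ A :=
  Submodule.span ℂ {a | ∃ f : Fin n → W, a = ∏ i, gen (f i)}

/-- The algebra is spanned by products of generators. -/
def SpanProdsOf (gen : W → A) : Prop :=
  ∀ x : A, x ∈ Submodule.span ℂ {a | ∃ (n : ℕ) (f : Fin n → W), a = ∏ i, gen (f i)}

/-- A quadratic: an antilinear functional concentrated in degree 2. -/
def IsQuadOf (gen : W → A) (ζ : A →ₗ⋆[ℂ] ℂ) : Prop :=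
  ∀ n : ℕ, n ≠ 2 → ∀ φ ∈ GradeOf gen n, ζ φ = 0

/-- The commutative product on the full antidual induced by the coproduct,
characterized on products of generators. -/
def IsConvProdOf (gen : W → A)
    (mul : (A →ₗ⋆[ℂ] ℂ) → (A →ₗ⋆[ℂ] ℂ) → (A →ₗ⋆[ℂ] ℂ)) : Prop :=
  ∀ (Φ Ψ : A →ₗ⋆[ℂ] ℂ) (n : ℕ) (v : Fin n → W),
    mul Φ Ψ (∏ i, gen (v i)) =
      ∑ S : Finset (Fin n), Φ (∏ i ∈ S, gen (v i)) * Ψ (∏ i ∈ Sᶜ, gen (v i))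

/-- The counit (unit of the antidual algebra): kills products of at least one generator. -/
def IsCounitOf (gen : W → A) (ε : A →ₗ⋆[ℂ] ℂ) : Prop :=
  ∀ (n : ℕ) (v : Fin n → W), ε (∏ i, gen (v i)) = if n = 0 then 1 else 0

/-- Powers of a functional with respect to the convolution product. -/
def powD (mul : (A →ₗ⋆[ℂ] ℂ) → (A →ₗ⋆[ℂ] ℂ) → (A →ₗ⋆[ℂ] ℂ))
    (ε ζ : A →ₗ⋆[ℂ] ℂ) : ℕ → (A →ₗ⋆[ℂ] ℂ)
  | 0 => ε
  | n + 1 => mul ζ (powD mul ε ζ n)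

/-- `E` is the Gaussian `exp ζ = Σ ζⁿ/n!` (a finite sum in each degree). -/
def IsGaussianOf (gen : W → A)
    (mul : (A →ₗ⋆[ℂ] ℂ) → (A →ₗ⋆[ℂ] ℂ) → (A →ₗ⋆[ℂ] ℂ))
    (ε ζ E : A →ₗ⋆[ℂ] ℂ) : Prop :=
  ∀ k : ℕ, ∀ ψ ∈ GradeOf gen k,
    E ψ = ∑ n ∈ Finset.range (k + 1), ((n.factorial : ℂ))⁻¹ * powD mul ε ζ n ψ

end Defs

section Defs2

variable {V A : Type} [NormedAddCommGroup V] [InnerProductSpace ℂ V]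
  [CommRing A] [Algebra ℂ A]

/-- The family of annihilation operators: derivations killing `1` with
`a v (ι w) = ⟨v|w⟩ 1`. -/
def IsAnn (ι : V →ₗ[ℂ] A) (a : V → A →ₗ[ℂ] A) : Prop :=
  ∀ v : V, (∀ x y : A, a v (x * y) = a v x * y + x * a v y) ∧
    a v 1 = 0 ∧ ∀ w : V, a v (ι w) = (inner ℂ v w : ℂ) • (1 : A)

/-- The canonical inner ℂ product on the symmetric algebra: graded pieces are
orthogonal and the permanent formula holds. (Antilinear in the first slot.) -/
def IsCanonInner (ι : V →ₗ[ℂ] A) (Bf : A →ₗ⋆[ℂ] A →ₗ[ℂ] ℂ) : Prop :=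
  (∀ (k n : ℕ), k ≠ n → ∀ (x : Fin k → V) (y : Fin n → V),
      Bf (∏ i, ι (x i)) (∏ i, ι (y i)) = 0) ∧
  ∀ (n : ℕ) (x y : Fin n → V),
      Bf (∏ i, ι (x i)) (∏ i, ι (y i)) =
        ∑ p : Equiv.Perm (Fin n), ∏ i, (inner ℂ (x i) (y (p i)) : ℂ)

/-- Iterated annihilation `a(vₙ)⋯a(v₁)φ` (applying `a(v₁)` first). -/
def iterAnn (a : V → A →ₗ[ℂ] A) : (n : ℕ) → (Fin n → V) → A → A
  | 0, _, φ => φ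
  | n + 1, v, φ => a (v (Fin.last n)) (iterAnn a n (fun i => v i.castSucc) φ)

/-- A symmetric bi-antilinear map `V × V → ℂ`. -/
def IsSymAnti (Z : V → V → ℂ) : Prop :=
  (∀ x y, Z x y = Z y x) ∧
  (∀ x y y', Z x (y + y') = Z x y + Z x y') ∧
  (∀ (c : ℂ) (x y : V), Z x (c • y) = conj c * Z x y)

end Defs2

section DefsC

variable {A AC : Type} [CommRing A] [Algebra ℂ A] [CommRing AC] [Algebra ℂ AC]

/-- An antilinear (conjugate-linear) algebra morphism, such as `φ ↦ φ₋`. -/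
def IsAntiAlgHom (m : A → AC) : Prop :=
  (∀ x y : A, m (x + y) = m x + m y) ∧ (∀ (c : ℂ) (x : A), m (c • x) = conj c • m x) ∧
  (∀ x y : A, m (x * y) = m x * m y) ∧ m 1 = 1

end DefsC

section AuxFinset

variable {I : Type}

/-- An enumeration `Fin S.card ↪ I` of a finset. -/
noncomputable def embOf (S : Finset I) : Fin S.card ↪ I :=
  ((((Fintype.equivFin S).trans (finCongr (Fintype.card_coe S))).symm.toEmbedding).trans
    (Function.Embedding.subtype _))

lemma embOf_map_univ (S : Finset I) : Finset.univ.map (embOf S) = S := by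
  rw [embOf, ← Finset.map_map, Finset.map_univ_equiv, Finset.univ_eq_attach,
    Finset.attach_map_val]

lemma prod_embOf {M : Type} [CommMonoid M] (S : Finset I) (f : I → M) :
    ∏ i ∈ S, f i = ∏ j, f (embOf S j) := by
  conv_lhs => rw [← embOf_map_univ S]
  exact Finset.prod_map _ _ _

lemma sdiff_map_embOf [DecidableEq I] (S : Finset I) (U : Finset (Fin S.card)) :
    S \ U.map (embOf S) = Uᶜ.map (embOf S) := by
  classical
  ext b
  simp only [Finset.mem_sdiff, Finset.mem_map, Finset.mem_compl]
  constructor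
  · rintro ⟨hbS, hnb⟩
    obtain ⟨a, ha⟩ : ∃ a, embOf S a = b := by
      rw [← embOf_map_univ S] at hbS
      simpa [Finset.mem_map] using hbS
    exact ⟨a, fun hU => hnb ⟨a, hU, ha⟩, ha⟩
  · rintro ⟨a, haU, rfl⟩
    have hmem : embOf S a ∈ Finset.univ.map (embOf S) :=
      Finset.mem_map_of_mem _ (Finset.mem_univ a)
    rw [embOf_map_univ S] at hmem
    refine ⟨hmem, ?_⟩
    rintro ⟨a', ha'U, ha'⟩
    cases (embOf S).injective ha'
    exact haU ha'U

end AuxFinset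

section AuxAlg

variable {W AC : Type} [CommRing AC] [Algebra ℂ AC]
variable (gen : W → AC) (mulC : (AC →ₗ⋆[ℂ] ℂ) → (AC →ₗ⋆[ℂ] ℂ) → (AC →ₗ⋆[ℂ] ℂ))
variable (εC ζV E : AC →ₗ⋆[ℂ] ℂ)

lemma gradeQ {I : Type} (v : I → W) (S : Finset I) :
    (∏ i ∈ S, gen (v i)) ∈ GradeOf gen S.card :=
  Submodule.subset_span ⟨fun j => v (embOf S j), prod_embOf S fun i => gen (v i)⟩

lemma convQ (hmulC : IsConvProdOf gen mulC) (Φ Ψ : AC →ₗ⋆[ℂ] ℂ)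
    {I : Type} [DecidableEq I] (v : I → W) (S : Finset I) :
    mulC Φ Ψ (∏ i ∈ S, gen (v i)) =
      ∑ T ∈ S.powerset, Φ (∏ i ∈ T, gen (v i)) * Ψ (∏ i ∈ S \ T, gen (v i)) := by
  classical
  rw [prod_embOf S fun i => gen (v i), hmulC Φ Ψ S.card fun j => v (embOf S j)]
  refine Finset.sum_nbij' (fun U => U.map (embOf S))
    (fun T => T.preimage (embOf S) (embOf S).injective.injOn) ?_ ?_ ?_ ?_ ?_
  · intro U _
    rw [Finset.mem_powerset]
    intro i hi
    obtain ⟨a, -, rfl⟩ := Finset.mem_map.mp hi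
    have hmem : embOf S a ∈ Finset.univ.map (embOf S) :=
      Finset.mem_map_of_mem _ (Finset.mem_univ a)
    rwa [embOf_map_univ S] at hmem
  · intro T _
    exact Finset.mem_univ _
  · intro U _
    ext a
    simp [Finset.mem_preimage, Finset.mem_map']
  · intro T hT
    rw [Finset.mem_powerset] at hT
    ext b
    simp only [Finset.mem_map, Finset.mem_preimage]
    constructor
    · rintro ⟨a, haT, rfl⟩
      exact haT
    · intro hbT
      obtain ⟨a, ha⟩ : ∃ a, embOf S a = b := by
        have : b ∈ Finset.univ.map (embOf S) := by rw [embOf_map_univ S]; exact hT hbT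
        simpa [Finset.mem_map] using this
      exact ⟨a, by rwa [ha], ha⟩
  · intro U _
    rw [sdiff_map_embOf S U, Finset.prod_map, Finset.prod_map]

lemma counitQ (hεC : IsCounitOf gen εC) {I : Type} [DecidableEq I] (v : I → W) (S : Finset I) :
    εC (∏ i ∈ S, gen (v i)) = if S = ∅ then 1 else 0 := by
  rw [prod_embOf S fun i => gen (v i), hεC S.card]
  simp [Finset.card_eq_zero]

lemma zetaQ_ne (hζq : IsQuadOf gen ζV) {I : Type} (v : I → W) (S : Finset I)
    (h : S.card ≠ 2) : ζV (∏ i ∈ S, gen (v i)) = 0 :=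
  hζq S.card h _ (gradeQ gen v S)

lemma powDQ_ne (hmulC : IsConvProdOf gen mulC) (hεC : IsCounitOf gen εC)
    (hζq : IsQuadOf gen ζV) {I : Type} [DecidableEq I] (v : I → W) :
    ∀ (r : ℕ) (S : Finset I), S.card ≠ 2 * r →
      powD mulC εC ζV r (∏ i ∈ S, gen (v i)) = 0 := by
  intro r
  induction r with
  | zero =>
    intro S hS
    have h0 : powD mulC εC ζV 0 = εC := rfl
    rw [h0, counitQ gen εC hεC v S, if_neg]
    intro h
    apply hS
    simp [h]
  | succ r ih =>
    intro S hS
    have h0 : powD mulC εC ζV (r + 1) = mulC ζV (powD mulC εC ζV r) := rfl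
    rw [h0, convQ gen mulC hmulC _ _ v S]
    refine Finset.sum_eq_zero fun T hT => ?_
    rw [Finset.mem_powerset] at hT
    by_cases h2 : T.card = 2
    · have hle := Finset.card_le_card hT
      have hsd : (S \ T).card ≠ 2 * r := by
        rw [Finset.card_sdiff_of_subset hT, h2]
        omega
      rw [ih (S \ T) hsd, mul_zero]
    · rw [zetaQ_ne gen ζV hζq v T h2, zero_mul]

lemma EQ_val (hmulC : IsConvProdOf gen mulC) (hεC : IsCounitOf gen εC)
    (hζq : IsQuadOf gen ζV) (hE : IsGaussianOf gen mulC εC ζV E)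
    {I : Type} [DecidableEq I] (v : I → W) (S : Finset I) (msize : ℕ) (hS : S.card = 2 * msize) :
    E (∏ i ∈ S, gen (v i)) =
      ((msize.factorial : ℂ))⁻¹ * powD mulC εC ζV msize (∏ i ∈ S, gen (v i)) := by
  rw [hE S.card _ (gradeQ gen v S)]
  refine Finset.sum_eq_single msize (fun r _ hne => ?_) (fun h => ?_)
  · rw [powDQ_ne gen mulC εC ζV hmulC hεC hζq v r S (by omega), mul_zero]
  · exact absurd (Finset.mem_range.mpr (by omega)) h

lemma EQ_odd (hmulC : IsConvProdOf gen mulC) (hεC : IsCounitOf gen εC)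
    (hζq : IsQuadOf gen ζV) (hE : IsGaussianOf gen mulC εC ζV E)
    {I : Type} [DecidableEq I] (v : I → W) (S : Finset I) (hodd : Odd S.card) :
    E (∏ i ∈ S, gen (v i)) = 0 := by
  rw [hE S.card _ (gradeQ gen v S)]
  refine Finset.sum_eq_zero fun r _ => ?_
  obtain ⟨c, hc⟩ := hodd
  rw [powDQ_ne gen mulC εC ζV hmulC hεC hζq v r S (by omega), mul_zero]

lemma EQ_rec (hmulC : IsConvProdOf gen mulC) (hεC : IsCounitOf gen εC)
    (hζq : IsQuadOf gen ζV) (hE : IsGaussianOf gen mulC εC ζV E)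
    {I : Type} [DecidableEq I] (v : I → W) (S : Finset I) (msize : ℕ) (hS : S.card = 2 * (msize + 1)) :
    E (∏ i ∈ S, gen (v i)) = ((msize : ℂ) + 1)⁻¹ *
      ∑ T ∈ S.powerset, ζV (∏ i ∈ T, gen (v i)) * E (∏ i ∈ S \ T, gen (v i)) := by
  rw [EQ_val gen mulC εC ζV E hmulC hεC hζq hE v S (msize + 1) hS]
  have h0 : powD mulC εC ζV (msize + 1) = mulC ζV (powD mulC εC ζV msize) := rfl
  rw [h0, convQ gen mulC hmulC _ _ v S]
  have hfac : (msize.factorial : ℂ) ≠ 0 := Nat.cast_ne_zero.mpr msize.factorial_ne_zero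
  have hterm : ∀ T ∈ S.powerset,
      ζV (∏ i ∈ T, gen (v i)) * powD mulC εC ζV msize (∏ i ∈ S \ T, gen (v i)) =
        (msize.factorial : ℂ) * (ζV (∏ i ∈ T, gen (v i)) * E (∏ i ∈ S \ T, gen (v i))) := by
    intro T hT
    rw [Finset.mem_powerset] at hT
    by_cases h2 : T.card = 2
    · have hsd : (S \ T).card = 2 * msize := by
        rw [Finset.card_sdiff_of_subset hT, h2, hS]
        omega
      rw [EQ_val gen mulC εC ζV E hmulC hεC hζq hE v (S \ T) msize hsd,
        mul_left_comm, mul_inv_cancel_left₀ hfac]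
    · rw [zetaQ_ne gen ζV hζq v T h2]
      ring
  rw [Finset.sum_congr rfl hterm, ← Finset.mul_sum, ← mul_assoc]
  congr 1
  have h1 : ((msize : ℂ) + 1) ≠ 0 := Nat.cast_add_one_ne_zero msize
  rw [Nat.factorial_succ]
  push_cast
  field_simp

lemma pair_sum (hζq : IsQuadOf gen ζV) {k l : ℕ}
    (v : Fin k ⊕ Fin l → W) (c : Fin k → Fin l → ℂ) (Ψfun : AC →ₗ⋆[ℂ] ℂ)
    (hpp : ∀ a a', ζV (gen (v (Sum.inl a)) * gen (v (Sum.inl a'))) = 0)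
    (hmm2 : ∀ b b', ζV (gen (v (Sum.inr b)) * gen (v (Sum.inr b'))) = 0)
    (hpm : ∀ a b, ζV (gen (v (Sum.inl a)) * gen (v (Sum.inr b))) = c a b) :
    ∑ T ∈ (Finset.univ : Finset (Fin k ⊕ Fin l)).powerset,
        ζV (∏ i ∈ T, gen (v i)) * Ψfun (∏ i ∈ Finset.univ \ T, gen (v i)) =
      ∑ a, ∑ b, c a b *
        Ψfun (∏ i ∈ ({Sum.inl a, Sum.inr b} : Finset (Fin k ⊕ Fin l))ᶜ, gen (v i)) := by
  classical
  set g : Fin k × Fin l → Finset (Fin k ⊕ Fin l) :=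
    fun ab => {Sum.inl ab.1, Sum.inr ab.2} with hgdef
  have hsub : Finset.univ.image g ⊆ Finset.univ.powerset :=
    fun T _ => Finset.mem_powerset.mpr (Finset.subset_univ _)
  have hvanish : ∀ T ∈ Finset.univ.powerset, T ∉ Finset.univ.image g →
      ζV (∏ i ∈ T, gen (v i)) * Ψfun (∏ i ∈ Finset.univ \ T, gen (v i)) = 0 := by
    intro T _ hT
    by_cases h2 : T.card = 2
    · obtain ⟨cc, dd, hne, rfl⟩ := Finset.card_eq_two.mp h2
      rcases cc with a | b <;> rcases dd with a' | b'
      · rw [Finset.prod_pair hne, hpp, zero_mul]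
      · exact absurd (Finset.mem_image.mpr ⟨(a, b'), Finset.mem_univ _, rfl⟩) hT
      · refine absurd (Finset.mem_image.mpr ⟨(a', b), Finset.mem_univ _, ?_⟩) hT
        exact Finset.pair_comm _ _
      · rw [Finset.prod_pair hne, hmm2, zero_mul]
    · rw [zetaQ_ne gen ζV hζq v T h2, zero_mul]
  have hinj : ∀ x ∈ (Finset.univ : Finset (Fin k × Fin l)), ∀ y ∈ Finset.univ,
      g x = g y → x = y := by
    intro pq _ rs _ hpq
    have h1 : (Sum.inl pq.1 : Fin k ⊕ Fin l) ∈ g rs := by rw [← hpq]; simp [hgdef]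
    have h2 : (Sum.inr pq.2 : Fin k ⊕ Fin l) ∈ g rs := by rw [← hpq]; simp [hgdef]
    simp only [hgdef, Finset.mem_insert, Finset.mem_singleton] at h1 h2
    cases h1 with
    | inl h =>
      cases h2 with
      | inl h' => exact absurd h' (by simp)
      | inr h' => exact Prod.ext (Sum.inl.inj h) (Sum.inr.inj h')
    | inr h => exact absurd h (by simp)
  rw [← Finset.sum_subset hsub hvanish, Finset.sum_image hinj, Fintype.sum_prod_type]
  refine Finset.sum_congr rfl fun a _ => Finset.sum_congr rfl fun b _ => ?_
  have hone : (∏ i ∈ g (a, b), gen (v i)) = gen (v (Sum.inl a)) * gen (v (Sum.inr b)) :=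
    Finset.prod_pair (by simp)
  have hcompl : Finset.univ \ g (a, b) =
      ({Sum.inl a, Sum.inr b} : Finset (Fin k ⊕ Fin l))ᶜ := by
    rw [Finset.compl_eq_univ_sdiff]
  rw [hone, hpm, hcompl]

lemma prod_compl_pair {k l : ℕ} (v : Fin (k + 1) ⊕ Fin (l + 1) → W)
    (a : Fin (k + 1)) (b : Fin (l + 1)) :
    ∏ i ∈ ({Sum.inl a, Sum.inr b} : Finset (Fin (k + 1) ⊕ Fin (l + 1)))ᶜ, gen (v i) =
      (∏ i : Fin k, gen (v (Sum.inl (a.succAbove i)))) *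
        ∏ j : Fin l, gen (v (Sum.inr (b.succAbove j))) := by
  classical
  have hset : ({Sum.inl a, Sum.inr b} : Finset (Fin (k + 1) ⊕ Fin (l + 1)))ᶜ =
      (Finset.univ.map (a.succAboveEmb)).map ⟨Sum.inl, Sum.inl_injective⟩ ∪
        (Finset.univ.map (b.succAboveEmb)).map ⟨Sum.inr, Sum.inr_injective⟩ := by
    ext i
    cases i with
    | inl a' =>
      simp [Fin.succAboveEmb, Fin.exists_succAbove_eq_iff]
    | inr b' =>
      simp [Fin.succAboveEmb, Fin.exists_succAbove_eq_iff]
  have hdisj : Disjoint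
      ((Finset.univ.map (a.succAboveEmb)).map ⟨Sum.inl, Sum.inl_injective⟩)
      ((Finset.univ.map (b.succAboveEmb)).map ⟨Sum.inr, Sum.inr_injective⟩) := by
    refine Finset.disjoint_left.mpr ?_
    rintro z hz1 hz2
    simp only [Finset.mem_map, Function.Embedding.coeFn_mk] at hz1 hz2
    obtain ⟨u, -, rfl⟩ := hz1
    obtain ⟨w, -, hw⟩ := hz2
    simp at hw
  rw [hset, Finset.prod_union hdisj, Finset.prod_map, Finset.prod_map,
    Finset.prod_map, Finset.prod_map]
  rfl

end AuxAlg

section AuxPerm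

variable {V : Type} [NormedAddCommGroup V] [InnerProductSpace ℂ V]

lemma perm_pivot (n : ℕ) (x y : Fin (n + 1) → V) (a : Fin (n + 1)) :
    ∑ b : Fin (n + 1), (inner ℂ (x a) (y b) : ℂ) *
        ∑ τ : Equiv.Perm (Fin n), ∏ i : Fin n,
          (inner ℂ (x (a.succAbove i)) (y (b.succAbove (τ i))) : ℂ) =
      ∑ σ : Equiv.Perm (Fin (n + 1)), ∏ i : Fin (n + 1), (inner ℂ (x i) (y (σ i)) : ℂ) := by
  classical
  set Φ : Fin (n + 1) × Equiv.Perm (Fin n) → Equiv.Perm (Fin (n + 1)) :=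
    fun bτ => (finSuccEquiv' a).trans ((bτ.2.optionCongr).trans (finSuccEquiv' bτ.1).symm)
    with hΦdef
  have hΦa : ∀ bτ, Φ bτ a = bτ.1 := by
    intro bτ
    simp [hΦdef, Equiv.trans_apply, finSuccEquiv'_at, finSuccEquiv'_symm_none]
  have hΦs : ∀ bτ (i : Fin n), Φ bτ (a.succAbove i) = bτ.1.succAbove (bτ.2 i) := by
    intro bτ i
    simp [hΦdef, Equiv.trans_apply, finSuccEquiv'_succAbove, finSuccEquiv'_symm_some]
  have hbij : Function.Bijective Φ := by
    rw [Fintype.bijective_iff_injective_and_card]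
    constructor
    · intro pq rs hpq
      have h1 : pq.1 = rs.1 := by rw [← hΦa pq, ← hΦa rs, hpq]
      have h2 : pq.2 = rs.2 := by
        ext i
        have h3 := hΦs pq i
        rw [hpq, hΦs rs i, h1] at h3
        have := Fin.succAbove_right_injective (p := rs.1) h3.symm
        simp [this]
      exact Prod.ext h1 h2
    · simp [Fintype.card_perm, Nat.factorial_succ]
  have hfg : ∀ bτ : Fin (n + 1) × Equiv.Perm (Fin n),
      (inner ℂ (x a) (y bτ.1) : ℂ) * ∏ i : Fin n,
        (inner ℂ (x (a.succAbove i)) (y (bτ.1.succAbove (bτ.2 i))) : ℂ) =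
      ∏ i : Fin (n + 1), (inner ℂ (x i) (y (Φ bτ i)) : ℂ) := by
    intro bτ
    rw [Fin.prod_univ_succAbove (fun i => (inner ℂ (x i) (y (Φ bτ i)) : ℂ)) a, hΦa]
    congr 1
    exact Finset.prod_congr rfl fun i _ => by rw [hΦs]
  calc ∑ b : Fin (n + 1), (inner ℂ (x a) (y b) : ℂ) *
        ∑ τ : Equiv.Perm (Fin n), ∏ i : Fin n,
          (inner ℂ (x (a.succAbove i)) (y (b.succAbove (τ i))) : ℂ)
      = ∑ bτ : Fin (n + 1) × Equiv.Perm (Fin n), (inner ℂ (x a) (y bτ.1) : ℂ) *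
          ∏ i : Fin n, (inner ℂ (x (a.succAbove i)) (y (bτ.1.succAbove (bτ.2 i))) : ℂ) := by
        rw [Fintype.sum_prod_type]
        exact Finset.sum_congr rfl fun b _ => Finset.mul_sum _ _ _
    _ = ∑ σ : Equiv.Perm (Fin (n + 1)), ∏ i : Fin (n + 1), (inner ℂ (x i) (y (σ i)) : ℂ) :=
        Fintype.sum_bijective Φ hbij _ _ hfg

end AuxPerm

lemma m_prod {A AC : Type} [CommRing A] [Algebra ℂ A] [CommRing AC] [Algebra ℂ AC]
    (m : A → AC) (hm : IsAntiAlgHom m) {J : Type} (s : Finset J) (f : J → A) :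
    m (∏ i ∈ s, f i) = ∏ i ∈ s, m (f i) := by
  classical
  induction s using Finset.cons_induction with
  | empty => simpa using hm.2.2.2
  | cons a s ha ih => rw [Finset.prod_cons, Finset.prod_cons, hm.2.2.1, ih]

section AuxCore

variable {V A AC : Type}
variable [NormedAddCommGroup V] [InnerProductSpace ℂ V]
variable [CommRing A] [Algebra ℂ A] [CommRing AC] [Algebra ℂ AC]
variable (ι : V →ₗ[ℂ] A) (Bf : A →ₗ⋆[ℂ] A →ₗ[ℂ] ℂ)
variable (p : A →ₐ[ℂ] AC) (m : A → AC) (gen : V ⊕ V → AC)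
variable (mulC : (AC →ₗ⋆[ℂ] ℂ) → (AC →ₗ⋆[ℂ] ℂ) → (AC →ₗ⋆[ℂ] ℂ))
variable (εC ζV E : AC →ₗ⋆[ℂ] ℂ)

lemma core_expand
    (hgen : ∀ w : V ⊕ V, gen w = Sum.elim (fun v => p (ι v)) (fun v => m (ι v)) w)
    (hmulC : IsConvProdOf gen mulC) (hεC : IsCounitOf gen εC)
    (hζq : IsQuadOf gen ζV)
    (hζpm : ∀ x y : V, ζV (p (ι x) * m (ι y)) = (inner ℂ x y : ℂ))
    (hζpp : ∀ x y : V, ζV (p (ι x) * p (ι y)) = 0)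
    (hζmm : ∀ x y : V, ζV (m (ι x) * m (ι y)) = 0)
    (hE : IsGaussianOf gen mulC εC ζV E)
    (k l t' : ℕ) (x : Fin k → V) (y : Fin l → V)
    (hcard : k + l = 2 * (t' + 1)) :
    E ((∏ i, p (ι (x i))) * ∏ j, m (ι (y j))) =
      ((t' : ℂ) + 1)⁻¹ * ∑ a : Fin k, ∑ b : Fin l, (inner ℂ (x a) (y b) : ℂ) *
        E (∏ i ∈ ({Sum.inl a, Sum.inr b} : Finset (Fin k ⊕ Fin l))ᶜ,
            gen (Sum.elim (fun a' => Sum.inl (x a')) (fun b' => Sum.inr (y b')) i)) := by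
  classical
  set v : Fin k ⊕ Fin l → V ⊕ V :=
    Sum.elim (fun a' => Sum.inl (x a')) (fun b' => Sum.inr (y b')) with hv
  have hgenl : ∀ a, gen (v (Sum.inl a)) = p (ι (x a)) := by
    intro a; rw [hgen]; simp [hv]
  have hgenr : ∀ b, gen (v (Sum.inr b)) = m (ι (y b)) := by
    intro b; rw [hgen]; simp [hv]
  have hQ : (∏ i, gen (v i)) = (∏ i, p (ι (x i))) * ∏ j, m (ι (y j)) := by
    rw [Fintype.prod_sum_type]
    simp only [hgenl, hgenr]
  have hcard2 : (Finset.univ : Finset (Fin k ⊕ Fin l)).card = 2 * (t' + 1) := by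
    simp only [Finset.card_univ, Fintype.card_sum, Fintype.card_fin]
    omega
  rw [← hQ, EQ_rec gen mulC εC ζV E hmulC hεC hζq hE v Finset.univ t' hcard2,
    pair_sum gen ζV hζq v (fun a b => (inner ℂ (x a) (y b) : ℂ)) E
      (fun a a' => by rw [hgenl, hgenl]; exact hζpp _ _)
      (fun b b' => by rw [hgenr, hgenr]; exact hζmm _ _)
      (fun a b => by rw [hgenl, hgenr]; exact hζpm _ _)]

lemma core
    (hB : IsCanonInner ι Bf)
    (hgen : ∀ w : V ⊕ V, gen w = Sum.elim (fun v => p (ι v)) (fun v => m (ι v)) w)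
    (hmulC : IsConvProdOf gen mulC) (hεC : IsCounitOf gen εC)
    (hζq : IsQuadOf gen ζV)
    (hζpm : ∀ x y : V, ζV (p (ι x) * m (ι y)) = (inner ℂ x y : ℂ))
    (hζpp : ∀ x y : V, ζV (p (ι x) * p (ι y)) = 0)
    (hζmm : ∀ x y : V, ζV (m (ι x) * m (ι y)) = 0)
    (hE : IsGaussianOf gen mulC εC ζV E) (M : ℕ) :
    ∀ (k l : ℕ), k + l = M → ∀ (x : Fin k → V) (y : Fin l → V),
      E ((∏ i, p (ι (x i))) * ∏ j, m (ι (y j))) =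
        Bf (∏ i, ι (x i)) (∏ j, ι (y j)) := by
  classical
  induction M using Nat.strong_induction_on with
  | _ M IH =>
  intro k l hM x y
  rcases Nat.even_or_odd (k + l) with he | ho
  · obtain ⟨t, ht⟩ := he
    by_cases ht0 : t = 0
    · subst ht0
      have hk : k = 0 := by omega
      have hl : l = 0 := by omega
      subst hk; subst hl
      simp only [Finset.univ_eq_empty, Finset.prod_empty, mul_one]
      have hE1 : E (1 : AC) = 1 := by
        have h1 : (1 : AC) = ∏ i ∈ (∅ : Finset (Fin 0)), gen (Fin.elim0 i) := by simp
        rw [h1, EQ_val gen mulC εC ζV E hmulC hεC hζq hE Fin.elim0 ∅ 0 (by simp)]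
        have h0 : powD mulC εC ζV 0 = εC := rfl
        rw [h0, counitQ gen εC hεC Fin.elim0 ∅]
        simp
      have hB1 : Bf (1 : A) (1 : A) = 1 := by
        have h2 := hB.2 0 x y
        simp only [Finset.univ_eq_empty, Finset.prod_empty] at h2
        rw [Finset.sum_const, Finset.card_univ, Fintype.card_perm] at h2
        simpa using h2
      rw [hE1, hB1]
    · obtain ⟨t', rfl⟩ : ∃ t', t = t' + 1 := ⟨t - 1, by omega⟩
      rw [core_expand ι p m gen mulC εC ζV E hgen hmulC hεC hζq hζpm hζpp hζmm hE
        k l t' x y (by omega)]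
      rcases k with _ | k'
      · rw [hB.1 0 l (by omega) x y]
        simp
      · rcases l with _ | l'
        · rw [hB.1 (k' + 1) 0 (by omega) x y]
          simp
        · have hstep : ∀ (a : Fin (k' + 1)) (b : Fin (l' + 1)),
              E (∏ i ∈ ({Sum.inl a, Sum.inr b} : Finset (Fin (k' + 1) ⊕ Fin (l' + 1)))ᶜ,
                  gen (Sum.elim (fun a' => Sum.inl (x a')) (fun b' => Sum.inr (y b')) i)) =
                Bf (∏ i, ι (x (a.succAbove i))) (∏ j, ι (y (b.succAbove j))) := by
            intro a b
            rw [prod_compl_pair gen _ a b]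
            simp only [Sum.elim_inl, Sum.elim_inr, hgen]
            exact IH (k' + l') (by omega) k' l' rfl _ _
          simp only [hstep]
          by_cases hkl : k' = l'
          · subst hkl
            simp only [hB.2]
            rw [Finset.sum_congr rfl fun a _ => perm_pivot k' x y a,
              Finset.sum_const, Finset.card_univ, Fintype.card_fin, nsmul_eq_mul,
              ← mul_assoc]
            have hone : ((t' : ℂ) + 1)⁻¹ * ((k' + 1 : ℕ) : ℂ) = 1 := by
              have htk : t' = k' := by omega
              subst htk
              push_cast
              exact inv_mul_cancel₀ (Nat.cast_add_one_ne_zero t')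
            rw [hone, one_mul]
          · have hzero : ∀ (a : Fin (k' + 1)) (b : Fin (l' + 1)),
                Bf (∏ i, ι (x (a.succAbove i))) (∏ j, ι (y (b.succAbove j))) = 0 :=
              fun a b => hB.1 k' l' hkl _ _
            simp only [hzero, mul_zero, Finset.sum_const_zero]
            rw [hB.1 (k' + 1) (l' + 1) (by omega) x y]
  · obtain ⟨t, ht⟩ := ho
    have hkl : k ≠ l := by omega
    rw [hB.1 k l hkl x y]
    set v : Fin k ⊕ Fin l → V ⊕ V :=
      Sum.elim (fun a' => Sum.inl (x a')) (fun b' => Sum.inr (y b')) with hv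
    have hgenl : ∀ a, gen (v (Sum.inl a)) = p (ι (x a)) := by
      intro a; rw [hgen]; simp [hv]
    have hgenr : ∀ b, gen (v (Sum.inr b)) = m (ι (y b)) := by
      intro b; rw [hgen]; simp [hv]
    have hQ : (∏ i, gen (v i)) = (∏ i, p (ι (x i))) * ∏ j, m (ι (y j)) := by
      rw [Fintype.prod_sum_type]
      simp only [hgenl, hgenr]
    rw [← hQ]
    exact EQ_odd gen mulC εC ζV E hmulC hεC hζq hE v Finset.univ
      (by simp only [Finset.card_univ, Fintype.card_sum, Fintype.card_fin]
          exact ⟨t, by omega⟩)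

lemma mono
    (hB : IsCanonInner ι Bf)
    (hgen : ∀ w : V ⊕ V, gen w = Sum.elim (fun v => p (ι v)) (fun v => m (ι v)) w)
    (hmulC : IsConvProdOf gen mulC) (hεC : IsCounitOf gen εC)
    (hζq : IsQuadOf gen ζV)
    (hζpm : ∀ x y : V, ζV (p (ι x) * m (ι y)) = (inner ℂ x y : ℂ))
    (hζpp : ∀ x y : V, ζV (p (ι x) * p (ι y)) = 0)
    (hζmm : ∀ x y : V, ζV (m (ι x) * m (ι y)) = 0)
    (hE : IsGaussianOf gen mulC εC ζV E)
    (n : ℕ) (x y : Fin n → V) :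
    mulC ζV E ((∏ i, p (ι (x i))) * ∏ j, m (ι (y j))) =
      (n : ℂ) * Bf (∏ i, ι (x i)) (∏ j, ι (y j)) := by
  classical
  cases n with
  | zero =>
    have hz : ζV (1 : AC) = 0 := by
      have h := zetaQ_ne gen ζV hζq (Fin.elim0 : Fin 0 → V ⊕ V) ∅ (by simp)
      simpa using h
    have h1 := convQ gen mulC hmulC ζV E (Fin.elim0 : Fin 0 → V ⊕ V) ∅
    simp only [Finset.prod_empty, Finset.powerset_empty, Finset.sum_singleton,
      Finset.sdiff_empty] at h1
    rw [hz, zero_mul] at h1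
    simp only [Finset.univ_eq_empty, Finset.prod_empty, mul_one, Nat.cast_zero, zero_mul]
    exact h1
  | succ n' =>
    set v : Fin (n' + 1) ⊕ Fin (n' + 1) → V ⊕ V :=
      Sum.elim (fun a' => Sum.inl (x a')) (fun b' => Sum.inr (y b')) with hv
    have hgenl : ∀ a, gen (v (Sum.inl a)) = p (ι (x a)) := by
      intro a; rw [hgen]; simp [hv]
    have hgenr : ∀ b, gen (v (Sum.inr b)) = m (ι (y b)) := by
      intro b; rw [hgen]; simp [hv]
    have hQ : (∏ i, gen (v i)) = (∏ i, p (ι (x i))) * ∏ j, m (ι (y j)) := by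
      rw [Fintype.prod_sum_type]
      simp only [hgenl, hgenr]
    rw [← hQ, convQ gen mulC hmulC ζV E v Finset.univ,
      pair_sum gen ζV hζq v (fun a b => (inner ℂ (x a) (y b) : ℂ)) E
        (fun a a' => by rw [hgenl, hgenl]; exact hζpp _ _)
        (fun b b' => by rw [hgenr, hgenr]; exact hζmm _ _)
        (fun a b => by rw [hgenl, hgenr]; exact hζpm _ _)]
    have hstep : ∀ (a b : Fin (n' + 1)),
        E (∏ i ∈ ({Sum.inl a, Sum.inr b} : Finset (Fin (n' + 1) ⊕ Fin (n' + 1)))ᶜ,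
            gen (v i)) =
          Bf (∏ i, ι (x (a.succAbove i))) (∏ j, ι (y (b.succAbove j))) := by
      intro a b
      rw [prod_compl_pair gen v a b]
      simp only [hv, Sum.elim_inl, Sum.elim_inr, hgen]
      exact core ι Bf p m gen mulC εC ζV E hB hgen hmulC hεC hζq hζpm hζpp hζmm hE
        (n' + n') n' n' rfl _ _
    simp only [hstep, hB.2]
    rw [Finset.sum_congr rfl fun a _ => perm_pivot n' x y a,
      Finset.sum_const, Finset.card_univ, Fintype.card_fin, nsmul_eq_mul]

end AuxCore


/-- The number operator `N` (equal to `n·I` on `SⁿV`) has kernel `ζ_V·e^{Z_V}`: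
for `φ, ψ ∈ SⁿV`, `(ζ_V e^{Z_V})(ψ₊φ₋) = n⟨ψ|φ⟩ = ⟨ψ|Nφ⟩`. -/
theorem number_operator_kernel {V A AC : Type}
    [NormedAddCommGroup V] [InnerProductSpace ℂ V] [CompleteSpace V]
    [CommRing A] [Algebra ℂ A] [CommRing AC] [Algebra ℂ AC]
    (ι : V →ₗ[ℂ] A) (hA : IsSymmAlg ι)
    (Bf : A →ₗ⋆[ℂ] A →ₗ[ℂ] ℂ) (hB : IsCanonInner ι Bf)
    (N : A →ₗ[ℂ] A) (hN : ∀ n : ℕ, ∀ φ ∈ GradeOf (fun w => ι w) n, N φ = (n : ℂ) • φ)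
    (p : A →ₐ[ℂ] AC) (m : A → AC) (hm : IsAntiAlgHom m)
    (gen : V ⊕ V → AC)
    (hgen : ∀ w : V ⊕ V, gen w = Sum.elim (fun v => p (ι v)) (fun v => m (ι v)) w)
    (hspanC : SpanProdsOf gen)
    (mulC : (AC →ₗ⋆[ℂ] ℂ) → (AC →ₗ⋆[ℂ] ℂ) → (AC →ₗ⋆[ℂ] ℂ))
    (hmulC : IsConvProdOf gen mulC)
    (εC : AC →ₗ⋆[ℂ] ℂ) (hεC : IsCounitOf gen εC)
    (ζV : AC →ₗ⋆[ℂ] ℂ) (hζq : IsQuadOf gen ζV)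
    (hζpm : ∀ x y : V, ζV (p (ι x) * m (ι y)) = (inner ℂ x y : ℂ))
    (hζpp : ∀ x y : V, ζV (p (ι x) * p (ι y)) = 0)
    (hζmm : ∀ x y : V, ζV (m (ι x) * m (ι y)) = 0)
    (E : AC →ₗ⋆[ℂ] ℂ) (hE : IsGaussianOf gen mulC εC ζV E) :
    ∀ (n : ℕ) (φ ψ : A), φ ∈ GradeOf (fun w => ι w) n → ψ ∈ GradeOf (fun w => ι w) n →
      mulC ζV E (p ψ * m φ) = (n : ℂ) * Bf ψ φ ∧
      Bf ψ (N φ) = (n : ℂ) * Bf ψ φ := by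
  intro n φ ψ hφ hψ
  classical
  constructor
  · have main : ∀ ψ' (_ : ψ' ∈ Submodule.span ℂ {a : A | ∃ f : Fin n → V, a = ∏ i, ι (f i)}),
        ∀ φ' (_ : φ' ∈ Submodule.span ℂ {a : A | ∃ f : Fin n → V, a = ∏ i, ι (f i)}),
        mulC ζV E (p ψ' * m φ') = (n : ℂ) * Bf ψ' φ' := by
      intro ψ' hψ'
      induction hψ' using Submodule.span_induction with
      | mem ψ0 hψ0 =>
        intro φ' hφ'
        induction hφ' using Submodule.span_induction with
        | mem φ0 hφ0 =>
          obtain ⟨xf, rfl⟩ := hψ0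
          obtain ⟨yf, rfl⟩ := hφ0
          rw [map_prod, m_prod m hm]
          exact mono ι Bf p m gen mulC εC ζV E hB hgen hmulC hεC hζq hζpm hζpp hζmm hE
            n xf yf
        | zero =>
          have hm0 : m 0 = 0 := by
            have h := hm.1 0 0
            simp only [add_zero] at h
            exact left_eq_add.mp h
          rw [hm0, mul_zero, map_zero, map_zero, mul_zero]
        | add u w hu hw ihu ihw =>
          rw [hm.1, mul_add, map_add, ihu, ihw, map_add, mul_add]
        | smul c u hu ihu =>
          rw [hm.2.1, mul_smul_comm, map_smulₛₗ, ihu, map_smul]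
          simp only [smul_eq_mul, Complex.conj_conj]
          ring
      | zero =>
        intro φ' _
        simp
      | add u w hu hw ihu ihw =>
        intro φ' hφ'
        rw [map_add, add_mul, map_add, ihu φ' hφ', ihw φ' hφ', map_add,
          LinearMap.add_apply, mul_add]
      | smul c u hu ihu =>
        intro φ' hφ'
        rw [map_smul, smul_mul_assoc, map_smulₛₗ, ihu φ' hφ', map_smulₛₗ,
          LinearMap.smul_apply]
        simp only [smul_eq_mul]
        ring
    exact main ψ hψ φ hφ
  · rw [hN n φ hφ, map_smul, smul_eq_mul]
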